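/- Let f = g + τh where g is proper convex lower semicontinuous and h is differentiable with L-Lipschitz gradient. For the proximal gradient step x⁺ = prox_{γg}(x − γτ∇h(x)) with step size γ ∈ (0, 1/(τL)], one has f(x⁺) ≤ f(x) − (1/(2γ) − τL/2)‖x⁺ − x‖². -/

import Mathlib

set_option maxHeartbeats 1000000

open RealInnerProductSpace

/-- Descent-type bound from Lipschitz gradient (crude constant `L`). -/
lemma descent_bound {E : Type*} [NormedAddCommGroup E] [InnerProductSpace ℝ E]
    [CompleteSpace E]
    (h : E → ℝ) (h' : E → E) (hdiff : ∀ x, HasGradientAt h (h' x) x)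
    (L : ℝ) (hL0 : 0 ≤ L) (hlip : ∀ x z, ‖h' x - h' z‖ ≤ L * ‖x - z‖) (x y : E) :
    h y ≤ h x + ⟪h' x, y - x⟫ + L * ‖y - x‖ ^ 2 := by
  have key : ‖h y - h x - (InnerProductSpace.toDual ℝ E (h' x)) (y - x)‖
      ≤ (L * ‖y - x‖) * ‖y - x‖ := by
    apply Convex.norm_image_sub_le_of_norm_hasFDerivWithin_le'
      (f' := fun z => InnerProductSpace.toDual ℝ E (h' z))
      (fun z _ => (hasGradientAt_iff_hasFDerivAt.mp (hdiff z)).hasFDerivWithinAt)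
      ?_ (convex_segment x y) (left_mem_segment ℝ x y) (right_mem_segment ℝ x y)
    intro z hz
    have h1 : ‖InnerProductSpace.toDual ℝ E (h' z) - InnerProductSpace.toDual ℝ E (h' x)‖
        = ‖h' z - h' x‖ := by
      rw [← map_sub]
      exact (InnerProductSpace.toDual ℝ E).norm_map _
    rw [h1]
    refine (hlip z x).trans ?_
    have : ‖z - x‖ ≤ ‖y - x‖ := by
      obtain ⟨a, b, ha, hb, hab, rfl⟩ := hz
      have haa : a = 1 - b := by linarith
      have hxx : a • x + b • y - x = b • (y - x) := by rw [haa]; module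
      rw [hxx, norm_smul]
      simp only [Real.norm_eq_abs, abs_of_nonneg hb]
      nlinarith [norm_nonneg (y - x)]
    nlinarith
  have h2 : (InnerProductSpace.toDual ℝ E (h' x)) (y - x) = ⟪h' x, y - x⟫ := rfl
  rw [h2] at key
  have h3 := (abs_le.mp (show |h y - h x - ⟪h' x, y - x⟫| ≤ L * ‖y - x‖ * ‖y - x‖ from by
    rw [← Real.norm_eq_abs]; exact key)).2
  nlinarith [h3]

theorem pgm_sufficient_decrease (n : ℕ)
    (g : EuclideanSpace ℝ (Fin n) → ℝ)
    (hg_conv : ConvexOn ℝ Set.univ g) (hg_lsc : LowerSemicontinuous g)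
    (h : EuclideanSpace ℝ (Fin n) → ℝ)
    (h' : EuclideanSpace ℝ (Fin n) → EuclideanSpace ℝ (Fin n))
    (hdiff : ∀ x, HasGradientAt h (h' x) x)
    (L τ γ : ℝ) (hL : 0 < L) (hτ : 0 < τ) (hγ : 0 < γ) (hγle : γ ≤ 1 / (τ * L))
    (hlip : ∀ x z, ‖h' x - h' z‖ ≤ L * ‖x - z‖)
    (f : EuclideanSpace ℝ (Fin n) → ℝ) (hf : ∀ x, f x = g x + τ * h x)
    (x xplus : EuclideanSpace ℝ (Fin n))
    (hprox : IsMinOn (fun u => (1/2) * ‖u - (x - (γ * τ) • h' x)‖ ^ 2 + γ * g u)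
        Set.univ xplus) :
    f xplus ≤ f x - (1 / (2 * γ) - τ * L / 2) * ‖xplus - x‖ ^ 2 := by
  set z := x - (γ * τ) • h' x with hz
  set a := xplus - z with ha
  set b := x - xplus with hb
  -- Step 1: prox optimality ⇒ ⟪a, b⟫ + γ (g x - g xplus) ≥ 0
  have step : ∀ t : ℝ, 0 < t → t ≤ 1 →
      0 ≤ ⟪a, b⟫ + (t / 2) * ‖b‖ ^ 2 + γ * (g x - g xplus) := by
    intro t ht ht1
    have hut : xplus + t • b = (1 - t) • xplus + t • x := by rw [hb]; module
    have hmin := hprox (Set.mem_univ (xplus + t • b))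
    simp only [Set.mem_setOf_eq] at hmin
    have hgc : g (xplus + t • b) ≤ (1 - t) * g xplus + t * g x := by
      rw [hut]
      have := hg_conv.2 (Set.mem_univ xplus) (Set.mem_univ x)
        (by linarith : (0:ℝ) ≤ 1 - t) (le_of_lt ht) (by ring)
      simpa using this
    have hnorm : ‖xplus + t • b - z‖ ^ 2 = ‖a‖ ^ 2 + 2 * t * ⟪a, b⟫ + t ^ 2 * ‖b‖ ^ 2 := by
      have : xplus + t • b - z = a + t • b := by rw [ha]; module
      rw [this, ← real_inner_self_eq_norm_sq, ← real_inner_self_eq_norm_sq,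
        ← real_inner_self_eq_norm_sq]
      rw [inner_add_add_self, real_inner_smul_left, real_inner_smul_right,
        real_inner_smul_left, real_inner_smul_right, real_inner_comm b a]
      ring
    have h0 : (1/2 : ℝ) * ‖a‖ ^ 2 + γ * g xplus ≤
        (1/2) * (‖a‖ ^ 2 + 2 * t * ⟪a, b⟫ + t ^ 2 * ‖b‖ ^ 2)
          + γ * ((1 - t) * g xplus + t * g x) := by
      calc (1/2 : ℝ) * ‖a‖ ^ 2 + γ * g xplus
          ≤ (1/2) * ‖xplus + t • b - z‖ ^ 2 + γ * g (xplus + t • b) := hmin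
        _ ≤ _ := by rw [hnorm]; nlinarith [hgc, hγ]
    nlinarith [h0, ht, mul_pos ht hγ]
  have key : 0 ≤ ⟪a, b⟫ + γ * (g x - g xplus) := by
    rw [← sub_nonneg]
    have : ∀ ε > (0:ℝ), 0 ≤ ⟪a, b⟫ + γ * (g x - g xplus) + ε := by
      intro ε hε
      set t := min 1 (2 * ε / (‖b‖ ^ 2 + 1)) with htdef
      have hbpos : (0:ℝ) < ‖b‖ ^ 2 + 1 := by positivity
      have ht : 0 < t := lt_min one_pos (by positivity)
      have ht1 : t ≤ 1 := min_le_left _ _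
      have h2 : (t / 2) * ‖b‖ ^ 2 ≤ ε := by
        have : t ≤ 2 * ε / (‖b‖ ^ 2 + 1) := min_le_right _ _
        have h3 : t * (‖b‖ ^ 2 + 1) ≤ 2 * ε := by
          rw [← le_div_iff₀ hbpos] at *; linarith
        nlinarith [sq_nonneg ‖b‖, ht]
      have := step t ht ht1
      linarith
    by_contra hneg
    push_neg at hneg
    have := this (-(⟪a, b⟫ + γ * (g x - g xplus)) / 2) (by simp at hneg ⊢; linarith)
    linarith
  -- Step 2: rewrite ⟪a, b⟫
  have hab : ⟪a, b⟫ = -‖xplus - x‖ ^ 2 - (γ * τ) * ⟪h' x, xplus - x⟫ := by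
    have ha' : a = (xplus - x) + (γ * τ) • h' x := by rw [ha, hz]; module
    have hb' : b = -(xplus - x) := by rw [hb]; module
    rw [ha', hb', inner_add_left, inner_neg_right, inner_neg_right,
      real_inner_smul_left, real_inner_self_eq_norm_sq]
    ring
  -- Step 3: g bound
  have hgb : γ * g xplus ≤ γ * g x - ‖xplus - x‖ ^ 2 - (γ * τ) * ⟪h' x, xplus - x⟫ := by
    rw [hab] at key; linarith
  -- Step 4: descent
  have hdesc := descent_bound h h' hdiff L (le_of_lt hL) hlip x xplus
  -- Combine
  have hγL : γ * (τ * L) ≤ 1 := by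
    rw [le_div_iff₀ (by positivity)] at hγle; linarith
  have hnn : (0:ℝ) ≤ ‖xplus - x‖ ^ 2 := by positivity
  rw [hf, hf, ← mul_le_mul_iff_right₀ hγ]
  have hhalf : γ * (1 / (2 * γ)) = 1 / 2 := by field_simp
  have hdesc' := mul_le_mul_of_nonneg_left hdesc (by positivity : (0:ℝ) ≤ γ * τ)
  nlinarith [hgb, hdesc', hγL, hnn, hhalf,
    mul_nonneg (by linarith : (0:ℝ) ≤ 1 - γ * (τ * L)) hnn]
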